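/- For any unit quaternion (η̃, q̃) with R̃ = I + 2S(q̃)² − 2η̃S(q̃), and any x ∈ R^3, one has (I − R̃) x = f2(x, η̃, q̃) q̃ where f2(x, η̃, q̃) = 2 (S(q̃) − η̃ I) S(x); moreover ‖f2(x, η̃, q̃)‖ ≤ 2‖x‖ in operator norm. -/
import Mathlib
set_option maxHeartbeats 1000000


open Matrix

noncomputable section

/-- The skew-symmetric (cross-product) matrix `S(x)`, satisfying `S(x) y = x × y`. -/
def sk (x : Fin 3 → ℝ) : Matrix (Fin 3) (Fin 3) ℝ :=
  !![0, -x 2, x 1; x 2, 0, -x 0; -x 1, x 0, 0]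

/-- The Euclidean norm of a vector in ℝ³. -/
def vnorm (x : Fin 3 → ℝ) : ℝ := Real.sqrt (x ⬝ᵥ x)

/-- The operator (spectral) norm of a 3×3 real matrix. -/
def opNorm (M : Matrix (Fin 3) (Fin 3) ℝ) : ℝ :=
  ‖(Matrix.toEuclideanCLM (𝕜 := ℝ) M : EuclideanSpace ℝ (Fin 3) →L[ℝ] EuclideanSpace ℝ (Fin 3))‖

/-- The Rodrigues map `R(Q) = I + 2 S(q)² - 2 η S(q)`. -/
def rod (η : ℝ) (q : Fin 3 → ℝ) : Matrix (Fin 3) (Fin 3) ℝ :=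
  1 + (2 : ℝ) • sk q ^ 2 - (2 * η) • sk q

/-- `f₂(x, η̃, q̃) = 2 (S(q̃) - η̃ I) S(x)`. -/
def f2 (x : Fin 3 → ℝ) (η : ℝ) (q : Fin 3 → ℝ) : Matrix (Fin 3) (Fin 3) ℝ :=
  (2 : ℝ) • ((sk q - η • (1 : Matrix (Fin 3) (Fin 3) ℝ)) * sk x)

lemma opNorm_le_of (M : Matrix (Fin 3) (Fin 3) ℝ) (c : ℝ) (hc : 0 ≤ c)
    (h : ∀ v : Fin 3 → ℝ, (M.mulVec v) ⬝ᵥ (M.mulVec v) ≤ c ^ 2 * (v ⬝ᵥ v)) :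
    opNorm M ≤ c := by
  apply ContinuousLinearMap.opNorm_le_bound _ hc
  intro v
  have h1 : toEuclideanCLM (𝕜 := ℝ) M v =
      (WithLp.equiv _ _).symm (M.mulVec (WithLp.equiv _ _ v)) := rfl
  rw [h1]
  have hv : ‖v‖ = Real.sqrt ((WithLp.equiv 2 _ v) ⬝ᵥ (WithLp.equiv 2 _ v)) := by
    rw [EuclideanSpace.norm_eq]
    congr 1
    simp [dotProduct, sq]
  have hw : ‖(WithLp.equiv 2 (Fin 3 → ℝ)).symm (M.mulVec (WithLp.equiv _ _ v))‖ =
      Real.sqrt ((M.mulVec (WithLp.equiv _ _ v)) ⬝ᵥ (M.mulVec (WithLp.equiv _ _ v))) := by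
    rw [EuclideanSpace.norm_eq]
    congr 1
    simp [dotProduct, sq]
  rw [hv, hw, ← Real.sqrt_sq hc, ← Real.sqrt_mul (by positivity)]
  apply Real.sqrt_le_sqrt
  simpa [sq] using h (WithLp.equiv _ _ v)

theorem f2_identity_and_bound (ηt : ℝ) (qt : Fin 3 → ℝ)
    (hQ : ηt ^ 2 + vnorm qt ^ 2 = 1) (x : Fin 3 → ℝ) :
    ((1 : Matrix (Fin 3) (Fin 3) ℝ) - rod ηt qt).mulVec x = (f2 x ηt qt).mulVec qt ∧
    opNorm (f2 x ηt qt) ≤ 2 * vnorm x := by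
  have hq0 : 0 ≤ qt ⬝ᵥ qt := Finset.sum_nonneg fun i _ => mul_self_nonneg (qt i)
  have hq2 : vnorm qt ^ 2 = qt ⬝ᵥ qt := by rw [vnorm, Real.sq_sqrt hq0]
  have hQ' : ηt ^ 2 + qt ⬝ᵥ qt = 1 := by rw [← hq2]; exact hQ
  constructor
  · funext i
    fin_cases i <;>
      simp [rod, f2, sk, mulVec, dotProduct, Matrix.mul_apply, pow_two, Fin.sum_univ_succ,
        Matrix.one_apply] <;> ring
  · have hx0 : 0 ≤ x ⬝ᵥ x := Finset.sum_nonneg fun i _ => mul_self_nonneg (x i)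
    have hvx : vnorm x ^ 2 = x ⬝ᵥ x := by rw [vnorm, Real.sq_sqrt hx0]
    have hvxn : 0 ≤ vnorm x := Real.sqrt_nonneg _
    apply opNorm_le_of _ _ (by positivity)
    intro v
    simp only [f2, dotProduct, mulVec, Matrix.mul_apply, Matrix.smul_apply, Matrix.sub_apply,
      Matrix.one_apply, sk, Fin.sum_univ_succ]
    simp [Fin.sum_univ_succ, dotProduct] at hQ' ⊢
    have hc2 : (2 * vnorm x) ^ 2 = 4 * (x ⬝ᵥ x) := by rw [mul_pow, hvx]; ring
    rw [hc2]
    simp [Fin.sum_univ_succ, dotProduct]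
    nlinarith [sq_nonneg (x 0 * v 0 + x 1 * v 1 + x 2 * v 2),
      sq_nonneg (qt 0 * (x 1 * v 2 - x 2 * v 1) + qt 1 * (x 2 * v 0 - x 0 * v 2)
        + qt 2 * (x 0 * v 1 - x 1 * v 0)),
      sq_nonneg (x 1 * v 2 - x 2 * v 1), sq_nonneg (x 2 * v 0 - x 0 * v 2),
      sq_nonneg (x 0 * v 1 - x 1 * v 0), hQ']


end
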